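/- arXiv:2410.15481 — 2 statements merged into one kernel-verified Lean document; each statement's English description precedes it below -/
import Mathlib

section
/- Let K: ℝ → ℂ be integrable, let [a₁, b₁] and [a₂, b₂] be compact intervals, and let f: ℝ² → ℂ be continuous, bounded by φ₀, with partial derivatives bounded by φ₁. Define F(s) = ∫_{a₂}^{b₂} f(s + s', s') · 1_{[a₁, b₁]}(s' + s) ds'. Then F is continuous, |F(s)| ≤ φ₀(b₂ − a₂) for all s, and F is differentiable at every s ∉ {a₁ − a₂, a₁ − b₂, b₁ − a₂, b₁ − b₂} with |F'(s)| ≤ φ₁(b₂ − a₂) + 2φ₀ there. -/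
open MeasureTheory Filter Set Topology

theorem stmt4 (f : ℝ × ℝ → ℂ) (hf : ContDiff ℝ 1 f) (φ₀ φ₁ : ℝ)
    (hb : ∀ p, ‖f p‖ ≤ φ₀)
    (hd1 : ∀ p, ‖fderiv ℝ f p (1, 0)‖ ≤ φ₁) (hd2 : ∀ p, ‖fderiv ℝ f p (0, 1)‖ ≤ φ₁)
    (a₁ b₁ a₂ b₂ : ℝ) (h1 : a₁ ≤ b₁) (h2 : a₂ ≤ b₂)
    (F : ℝ → ℂ)
    (hF : ∀ s, F s = ∫ s' in a₂..b₂,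
        f (s + s', s') * Set.indicator (Set.Icc a₁ b₁) 1 (s' + s)) :
    Continuous F ∧ (∀ s, ‖F s‖ ≤ φ₀ * (b₂ - a₂)) ∧
    ∀ s, s ∉ ({a₁ - a₂, a₁ - b₂, b₁ - a₂, b₁ - b₂} : Set ℝ) →
      ∃ F's, HasDerivAt F F's s ∧ ‖F's‖ ≤ φ₁ * (b₂ - a₂) + 2 * φ₀ := by
  have hfc : Continuous f := hf.continuous
  have hφ₀ : 0 ≤ φ₀ := le_trans (norm_nonneg _) (hb 0)
  have hφ₁ : 0 ≤ φ₁ := le_trans (norm_nonneg _) (hd1 0)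
  -- derivative of the parameter map
  have hder : ∀ u t : ℝ, HasDerivAt (fun t => f (u, u - t))
      (fderiv ℝ f (u, u - t) (0, -1)) t := by
    intro u t
    have hγ : HasDerivAt (fun t : ℝ => ((u : ℝ), u - t)) ((0 : ℝ), (-1 : ℝ)) t :=
      (hasDerivAt_const t u).prodMk ((hasDerivAt_id t).const_sub u)
    exact ((hf.differentiable one_ne_zero (u, u - t)).hasFDerivAt.comp_hasDerivAt t hγ)
  have hdernorm : ∀ u t : ℝ, ‖fderiv ℝ f (u, u - t) (0, -1)‖ ≤ φ₁ := by
    intro u t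
    have : ((0 : ℝ), (-1 : ℝ)) = -((0 : ℝ), (1 : ℝ)) := by simp
    rw [this, map_neg, norm_neg]
    exact hd2 _
  -- Lipschitz in the parameter
  have hlip : ∀ u t s : ℝ, ‖f (u, u - t) - f (u, u - s)‖ ≤ φ₁ * ‖t - s‖ := by
    intro u t s
    exact (convex_univ (𝕜 := ℝ) (E := ℝ)).norm_image_sub_le_of_norm_hasDerivWithin_le
      (fun x _ => (hder u x).hasDerivWithinAt) (fun x _ => hdernorm u x) (mem_univ s) (mem_univ t)
  -- norm bound on integrand
  have hib : ∀ s s' : ℝ,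
      ‖f (s + s', s') * Set.indicator (Set.Icc a₁ b₁) 1 (s' + s)‖ ≤ φ₀ := by
    intro s s'
    rw [norm_mul]
    by_cases h : s' + s ∈ Set.Icc a₁ b₁
    · rw [Set.indicator_of_mem h]; simpa using hb _
    · simp [Set.indicator_of_notMem h, hφ₀]
  refine ⟨?_, ?_, ?_⟩
  · -- Continuity
    rw [continuous_iff_continuousAt]
    intro s₀
    have hFeq : F = fun s => ∫ s' in a₂..b₂,
        f (s + s', s') * Set.indicator (Set.Icc a₁ b₁) 1 (s' + s) := funext hF
    rw [hFeq]
    apply intervalIntegral.continuousAt_of_dominated_interval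
      (bound := fun _ => φ₀) (μ := volume)
    · filter_upwards with s
      apply AEStronglyMeasurable.mul
      · exact (hfc.comp ((continuous_const.add continuous_id).prodMk
          continuous_id)).aestronglyMeasurable
      · exact ((measurable_const.indicator (measurableSet_Icc
          (a := a₁) (b := b₁))).comp (measurable_id.add_const s)).aestronglyMeasurable
    · filter_upwards with s
      filter_upwards with s' _
      exact hib s s'
    · exact intervalIntegrable_const
    · have hnull : volume ({a₁ - s₀, b₁ - s₀} : Set ℝ) = 0 := by
        exact Set.Finite.measure_zero (Set.toFinite _) volume
      filter_upwards [compl_mem_ae_iff.2 hnull] with s' hs' _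
      simp only [Set.mem_compl_iff, Set.mem_insert_iff, Set.mem_singleton_iff, not_or] at hs'
      have hcf : ContinuousAt (fun s => f (s + s', s')) s₀ :=
        (hfc.comp ((continuous_id.add continuous_const).prodMk continuous_const)).continuousAt
      have hne1 : s' + s₀ ≠ a₁ := fun h => hs'.1 (by linarith)
      have hne2 : s' + s₀ ≠ b₁ := fun h => hs'.2 (by linarith)
      by_cases hmem : s' + s₀ ∈ Set.Icc a₁ b₁
      · -- in the open interval; indicator is eventually 1
        rw [Set.mem_Icc] at hmem
        have hlt : a₁ < s' + s₀ ∧ s' + s₀ < b₁ :=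
          ⟨lt_of_le_of_ne hmem.1 (Ne.symm hne1), lt_of_le_of_ne hmem.2 hne2⟩
        have hev : (fun s => f (s + s', s') * Set.indicator (Set.Icc a₁ b₁) 1 (s' + s))
            =ᶠ[𝓝 s₀] fun s => f (s + s', s') := by
          have h₁ : ∀ᶠ s in 𝓝 s₀, a₁ < s' + s :=
            ((continuous_const.add continuous_id).tendsto s₀).eventually_const_lt hlt.1
          have h₂ : ∀ᶠ s in 𝓝 s₀, s' + s < b₁ :=
            ((continuous_const.add continuous_id).tendsto s₀).eventually_lt_const hlt.2
          filter_upwards [h₁, h₂] with s hs1 hs2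
          rw [Set.indicator_of_mem (Set.mem_Icc.mpr ⟨hs1.le, hs2.le⟩), Pi.one_apply, mul_one]
        exact hcf.congr hev.symm
      · -- outside; indicator is eventually 0
        have hev : (fun s => f (s + s', s') * Set.indicator (Set.Icc a₁ b₁) 1 (s' + s))
            =ᶠ[𝓝 s₀] fun _ => (0 : ℂ) := by
          have : ∀ᶠ s in 𝓝 s₀, s' + s ∉ Set.Icc a₁ b₁ := by
            have hcl : IsOpen (Set.Icc a₁ b₁)ᶜ := isClosed_Icc.isOpen_compl
            have := ((continuous_const.add continuous_id : Continuous fun s : ℝ => s' + s)).continuousAt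
              (x := s₀) |>.preimage_mem_nhds (hcl.mem_nhds hmem)
            filter_upwards [this] with s hs using hs
          filter_upwards [this] with s hs
          rw [Set.indicator_of_notMem hs, mul_zero]
        exact continuousAt_const.congr hev.symm
  · -- Bound
    intro s
    rw [hF s]
    calc ‖∫ s' in a₂..b₂, f (s + s', s') * Set.indicator (Set.Icc a₁ b₁) 1 (s' + s)‖
        ≤ φ₀ * |b₂ - a₂| :=
          intervalIntegral.norm_integral_le_of_norm_le_const fun x _ => hib s x
      _ = φ₀ * (b₂ - a₂) := by rw [abs_of_nonneg (by linarith)]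
  · -- Differentiability
    intro s hs
    simp only [Set.mem_insert_iff, Set.mem_singleton_iff, not_or] at hs
    obtain ⟨hs1, hs2, hs3, hs4⟩ := hs
    set g : ℝ → ℝ → ℂ := fun t u => f (u, u - t) with hg
    have hgc : ∀ t, Continuous (g t) := fun t =>
      hfc.comp (continuous_id.prodMk (continuous_id.sub continuous_const))
    have hgi : ∀ t c d, IntervalIntegrable (g t) volume c d := fun t c d =>
      (hgc t).intervalIntegrable c d
    have hIoc_max : ∀ c d : ℝ, Set.Ioc c d = Set.Ioc c (max c d) := by
      intro c d
      rcases le_total c d with h | h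
      · rw [max_eq_right h]
      · rw [Set.Ioc_eq_empty (not_lt.mpr h), max_eq_left h, Set.Ioc_self]
    have hrep : ∀ t, F t =
        ∫ u in (max (a₂ + t) a₁)..(max (max (a₂ + t) a₁) (min (b₂ + t) b₁)), g t u := by
      intro t
      rw [hF t]
      have e1 : (∫ s' in a₂..b₂, f (t + s', s') * Set.indicator (Set.Icc a₁ b₁) 1 (s' + t))
          = ∫ u in (a₂ + t)..(b₂ + t), f (u, u - t) * Set.indicator (Set.Icc a₁ b₁) 1 u := by
        rw [← intervalIntegral.integral_comp_add_right
          (fun u => f (u, u - t) * Set.indicator (Set.Icc a₁ b₁) 1 u) t]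
        apply intervalIntegral.integral_congr
        intro u _
        simp only [add_sub_cancel_right, add_comm t u]
      rw [e1]
      have e2 : ∀ u, f (u, u - t) * Set.indicator (Set.Icc a₁ b₁) 1 u
          = Set.indicator (Set.Icc a₁ b₁) (g t) u := by
        intro u
        by_cases h : u ∈ Set.Icc a₁ b₁
        · rw [Set.indicator_of_mem h, Set.indicator_of_mem h, Pi.one_apply, mul_one]
        · rw [Set.indicator_of_notMem h, Set.indicator_of_notMem h, mul_zero]
      rw [intervalIntegral.integral_of_le (by linarith : a₂ + t ≤ b₂ + t)]
      simp_rw [e2]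
      rw [setIntegral_indicator measurableSet_Icc]
      have e3 : ∫ u in Set.Ioc (a₂ + t) (b₂ + t) ∩ Set.Icc a₁ b₁, g t u
          = ∫ u in Set.Ioc (a₂ + t) (b₂ + t) ∩ Set.Ioc a₁ b₁, g t u := by
        apply setIntegral_congr_set
        exact MeasureTheory.ae_eq_set_inter (Filter.EventuallyEq.refl _ _) Ioc_ae_eq_Icc.symm
      rw [e3, Set.Ioc_inter_Ioc, hIoc_max,
        ← intervalIntegral.integral_of_le (le_max_left _ _)]
    set X := max (a₂ + s) a₁ with hXdef
    set M := min (b₂ + s) b₁ with hMdef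
    set Y := max X M with hYdef
    have tendsto_add : ∀ c : ℝ, Filter.Tendsto (fun t : ℝ => c + t) (𝓝 s) (𝓝 (c + s)) :=
      fun c => (continuous_const.add continuous_id).tendsto s
    have hXM : ∀ ha : a₂ + s ≠ a₁, ∀ hbb : b₂ + s ≠ b₁,
        ∃ β γ : ℝ, |β| ≤ 1 ∧ |γ| ≤ 1 ∧
        (∀ᶠ t in 𝓝 s, max (a₂ + t) a₁ = X + β * (t - s)) ∧
        (∀ᶠ t in 𝓝 s, max (max (a₂ + t) a₁) (min (b₂ + t) b₁) = Y + γ * (t - s)) := by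
      intro ha hbb
      have hX : (a₂ + s < a₁ ∧ ∀ᶠ t in 𝓝 s, max (a₂ + t) a₁ = a₁) ∨
          (a₁ < a₂ + s ∧ ∀ᶠ t in 𝓝 s, max (a₂ + t) a₁ = a₂ + t) := by
        rcases lt_or_gt_of_ne ha with h | h
        · left
          refine ⟨h, ?_⟩
          filter_upwards [(tendsto_add a₂).eventually_lt_const h] with t ht
          exact max_eq_right ht.le
        · right
          refine ⟨h, ?_⟩
          filter_upwards [(tendsto_add a₂).eventually_const_lt h] with t ht
          exact max_eq_left ht.le
      have hM : (b₁ < b₂ + s ∧ ∀ᶠ t in 𝓝 s, min (b₂ + t) b₁ = b₁) ∨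
          (b₂ + s < b₁ ∧ ∀ᶠ t in 𝓝 s, min (b₂ + t) b₁ = b₂ + t) := by
        rcases lt_or_gt_of_ne hbb with h | h
        · right
          refine ⟨h, ?_⟩
          filter_upwards [(tendsto_add b₂).eventually_lt_const h] with t ht
          exact min_eq_left ht.le
        · left
          refine ⟨h, ?_⟩
          filter_upwards [(tendsto_add b₂).eventually_const_lt h] with t ht
          exact min_eq_right ht.le
      rcases hX with ⟨hlt, hx⟩ | ⟨hlt, hx⟩ <;> rcases hM with ⟨hlt', hm⟩ | ⟨hlt', hm⟩
      · -- X = a₁, M = b₁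
        have hXv : X = a₁ := max_eq_right hlt.le
        have hMv : M = b₁ := min_eq_right hlt'.le
        have hYv : Y = b₁ := by rw [hYdef, hXv, hMv, max_eq_right h1]
        refine ⟨0, 0, by norm_num, by norm_num, ?_, ?_⟩
        · filter_upwards [hx] with t ht; rw [ht, hXv]; ring
        · filter_upwards [hx, hm] with t ht hmt
          rw [ht, hmt, max_eq_right h1, hYv]; ring
      · -- X = a₁, M = b₂ + s
        have hXv : X = a₁ := max_eq_right hlt.le
        have hMv : M = b₂ + s := min_eq_left hlt'.le
        have hne : a₁ ≠ b₂ + s := fun h => hs2 (by linarith)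
        rcases lt_or_gt_of_ne hne with h | h
        · refine ⟨0, 1, by norm_num, by norm_num, ?_, ?_⟩
          · filter_upwards [hx] with t ht; rw [ht, hXv]; ring
          · have hYv : Y = b₂ + s := by rw [hYdef, hXv, hMv, max_eq_right h.le]
            filter_upwards [hx, hm, (tendsto_add b₂).eventually_const_lt h] with t ht hmt h3
            rw [ht, hmt, max_eq_right h3.le, hYv]; ring
        · refine ⟨0, 0, by norm_num, by norm_num, ?_, ?_⟩
          · filter_upwards [hx] with t ht; rw [ht, hXv]; ring
          · have hYv : Y = a₁ := by rw [hYdef, hXv, hMv, max_eq_left h.le]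
            filter_upwards [hx, hm, (tendsto_add b₂).eventually_lt_const h] with t ht hmt h3
            rw [ht, hmt, max_eq_left h3.le, hYv]; ring
      · -- X = a₂ + s, M = b₁
        have hXv : X = a₂ + s := max_eq_left hlt.le
        have hMv : M = b₁ := min_eq_right hlt'.le
        have hne : a₂ + s ≠ b₁ := fun h => hs3 (by linarith)
        rcases lt_or_gt_of_ne hne with h | h
        · refine ⟨1, 0, by norm_num, by norm_num, ?_, ?_⟩
          · filter_upwards [hx] with t ht; rw [ht, hXv]; ring
          · have hYv : Y = b₁ := by rw [hYdef, hXv, hMv, max_eq_right h.le]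
            filter_upwards [hx, hm, (tendsto_add a₂).eventually_lt_const h] with t ht hmt h3
            rw [ht, hmt, max_eq_right h3.le, hYv]; ring
        · refine ⟨1, 1, by norm_num, by norm_num, ?_, ?_⟩
          · filter_upwards [hx] with t ht; rw [ht, hXv]; ring
          · have hYv : Y = a₂ + s := by rw [hYdef, hXv, hMv, max_eq_left h.le]
            filter_upwards [hx, hm, (tendsto_add a₂).eventually_const_lt h] with t ht hmt h3
            rw [ht, hmt, max_eq_left h3.le, hYv]; ring
      · -- X = a₂ + s, M = b₂ + s
        have hXv : X = a₂ + s := max_eq_left hlt.le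
        have hMv : M = b₂ + s := min_eq_left hlt'.le
        have hYv : Y = b₂ + s := by rw [hYdef, hXv, hMv, max_eq_right (by linarith)]
        refine ⟨1, 1, by norm_num, by norm_num, ?_, ?_⟩
        · filter_upwards [hx] with t ht; rw [ht, hXv]; ring
        · filter_upwards [hx, hm] with t ht hmt
          rw [ht, hmt, max_eq_right (by linarith), hYv]; ring
    obtain ⟨β, γ, hβ, hγ, hxa, hya⟩ :=
      hXM (fun h => hs1 (by linarith)) (fun h => hs4 (by linarith))
    have hXY : X ≤ Y := le_max_left _ _
    have hYX : Y - X ≤ b₂ - a₂ := by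
      rcases le_total M X with h | h
      · rw [hYdef, max_eq_left h]; linarith
      · rw [hYdef, max_eq_right h]
        have h5 : M ≤ b₂ + s := min_le_left _ _
        have h6 : a₂ + s ≤ X := le_max_left _ _
        linarith
    -- the antiderivative in the endpoint variable
    set Φ : ℝ → ℂ := fun q => ∫ u in X..q, g s u with hΦdef
    have hΦ : ∀ q, HasDerivAt Φ (g s q) q := fun q =>
      intervalIntegral.integral_hasDerivAt_right (hgi s X q)
        ((hgc s).stronglyMeasurableAtFilter _ _) (hgc s).continuousAt
    have hAeq : ∀ cx cy : ℝ, Φ cy - Φ cx = ∫ u in cx..cy, g s u := fun cx cy =>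
      intervalIntegral.integral_interval_sub_left (hgi s X cy) (hgi s X cx)
    -- derivative of the endpoint part
    have h₁ : HasDerivAt (fun t => Φ (Y + γ * (t - s))) (γ • g s Y) s := by
      have haff : HasDerivAt (fun t : ℝ => Y + γ * (t - s)) γ s := by
        simpa using (((hasDerivAt_id s).sub_const s).const_mul γ).const_add Y
      have := (hΦ (Y + γ * (s - s))).scomp s haff
      simp only [sub_self, mul_zero, add_zero] at this
      exact this
    have h₂ : HasDerivAt (fun t => Φ (X + β * (t - s))) (β • g s X) s := by
      have haff : HasDerivAt (fun t : ℝ => X + β * (t - s)) β s := by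
        simpa using (((hasDerivAt_id s).sub_const s).const_mul β).const_add X
      have := (hΦ (X + β * (s - s))).scomp s haff
      simp only [sub_self, mul_zero, add_zero] at this
      exact this
    have hAder : HasDerivAt (fun t =>
        Φ (max (max (a₂ + t) a₁) (min (b₂ + t) b₁)) - Φ (max (a₂ + t) a₁))
        (γ • g s Y - β • g s X) s := by
      apply (h₁.sub h₂).congr_of_eventuallyEq
      filter_upwards [hxa, hya] with t ht1 ht2
      rw [ht2, ht1]; rfl
    -- derivative of the parameter part
    have hF'cont : Continuous fun u => fderiv ℝ f (u, u - s) (0, -1) :=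
      ((hf.continuous_fderiv one_ne_zero).comp
        (continuous_id.prodMk (continuous_id.sub continuous_const))).clm_apply
        continuous_const
    have hBd := (intervalIntegral.hasDerivAt_integral_of_dominated_loc_of_deriv_le
      (F := g) (F' := fun t u => fderiv ℝ f (u, u - t) (0, -1))
      (a := X) (b := Y) (x₀ := s) (bound := fun _ => φ₁) (μ := volume) (Metric.ball_mem_nhds s one_pos)
      (Filter.Eventually.of_forall fun t => (hgc t).aestronglyMeasurable)
      (hgi s X Y) hF'cont.aestronglyMeasurable
      (Filter.Eventually.of_forall fun u _ t _ => hdernorm u t)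
      intervalIntegrable_const
      (Filter.Eventually.of_forall fun u _ t _ => hder u t)).2
    -- the error term
    set E : ℝ → ℂ := fun t => F t -
      (Φ (max (max (a₂ + t) a₁) (min (b₂ + t) b₁)) - Φ (max (a₂ + t) a₁)) -
      (∫ u in X..Y, g t u) + ∫ u in X..Y, g s u with hEdef
    have hE0 : E s = 0 := by
      rw [hEdef]
      simp only
      rw [hrep s, hAeq]
      ring
    have hEsmall : ∀ᶠ t in 𝓝 s, ‖E t‖ ≤ 2 * φ₁ * (|t - s| * |t - s|) := by
      filter_upwards [hxa, hya] with t ht1 ht2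
      have hsub : ∀ c d : ℝ, IntervalIntegrable (fun u => g t u - g s u) volume c d :=
        fun c d => (hgi t c d).sub (hgi s c d)
      have key : E t = (∫ u in (max (a₂ + t) a₁)..X, g t u - g s u) +
          ∫ u in Y..(max (max (a₂ + t) a₁) (min (b₂ + t) b₁)), g t u - g s u := by
        rw [hEdef]
        simp only
        rw [hrep t, hAeq]
        have e4 : (∫ u in (max (a₂ + t) a₁)..(max (max (a₂ + t) a₁) (min (b₂ + t) b₁)),
            (g t u - g s u)) = (∫ u in (max (a₂ + t) a₁)..(max (max (a₂ + t) a₁) (min (b₂ + t) b₁)), g t u)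
            - ∫ u in (max (a₂ + t) a₁)..(max (max (a₂ + t) a₁) (min (b₂ + t) b₁)), g s u :=
          intervalIntegral.integral_sub (hgi t _ _) (hgi s _ _)
        have e3 : (∫ u in X..Y, (g t u - g s u)) = (∫ u in X..Y, g t u) - ∫ u in X..Y, g s u :=
          intervalIntegral.integral_sub (hgi t _ _) (hgi s _ _)
        have e1 : (∫ u in (max (a₂ + t) a₁)..X, (g t u - g s u)) +
            (∫ u in X..(max (max (a₂ + t) a₁) (min (b₂ + t) b₁)), (g t u - g s u)) =
            ∫ u in (max (a₂ + t) a₁)..(max (max (a₂ + t) a₁) (min (b₂ + t) b₁)), (g t u - g s u) :=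
          intervalIntegral.integral_add_adjacent_intervals (hsub _ _) (hsub _ _)
        have e2 : (∫ u in X..Y, (g t u - g s u)) +
            (∫ u in Y..(max (max (a₂ + t) a₁) (min (b₂ + t) b₁)), (g t u - g s u)) =
            ∫ u in X..(max (max (a₂ + t) a₁) (min (b₂ + t) b₁)), (g t u - g s u) :=
          intervalIntegral.integral_add_adjacent_intervals (hsub _ _) (hsub _ _)
        linear_combination -e4 - e1 - e2 + e3
      rw [key]
      have hb1 : ‖∫ u in (max (a₂ + t) a₁)..X, g t u - g s u‖ ≤ (φ₁ * |t - s|) * |t - s| := by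
        have := intervalIntegral.norm_integral_le_of_norm_le_const
          (C := φ₁ * |t - s|) (a := max (a₂ + t) a₁) (b := X)
          (f := fun u => g t u - g s u) (fun u _ => by
            simpa [Real.norm_eq_abs] using hlip u t s)
        refine this.trans ?_
        have : |X - max (a₂ + t) a₁| ≤ |t - s| := by
          rw [ht1]
          have : X - (X + β * (t - s)) = -(β * (t - s)) := by ring
          rw [this, abs_neg, abs_mul]
          calc |β| * |t - s| ≤ 1 * |t - s| := by
                apply mul_le_mul_of_nonneg_right hβ (abs_nonneg _)
            _ = |t - s| := one_mul _
        exact mul_le_mul_of_nonneg_left this (by positivity)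
      have hb2 : ‖∫ u in Y..(max (max (a₂ + t) a₁) (min (b₂ + t) b₁)), g t u - g s u‖ ≤
          (φ₁ * |t - s|) * |t - s| := by
        have := intervalIntegral.norm_integral_le_of_norm_le_const
          (C := φ₁ * |t - s|) (a := Y) (b := max (max (a₂ + t) a₁) (min (b₂ + t) b₁))
          (f := fun u => g t u - g s u) (fun u _ => by
            simpa [Real.norm_eq_abs] using hlip u t s)
        refine this.trans ?_
        have : |max (max (a₂ + t) a₁) (min (b₂ + t) b₁) - Y| ≤ |t - s| := by
          rw [ht2]
          have : Y + γ * (t - s) - Y = γ * (t - s) := by ring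
          rw [this, abs_mul]
          calc |γ| * |t - s| ≤ 1 * |t - s| := by
                apply mul_le_mul_of_nonneg_right hγ (abs_nonneg _)
            _ = |t - s| := one_mul _
        exact mul_le_mul_of_nonneg_left this (by positivity)
      calc ‖_ + _‖ ≤ _ := norm_add_le _ _
        _ ≤ (φ₁ * |t - s|) * |t - s| + (φ₁ * |t - s|) * |t - s| := add_le_add hb1 hb2
        _ = 2 * φ₁ * (|t - s| * |t - s|) := by ring
    have hE : HasDerivAt E 0 s := by
      rw [hasDerivAt_iff_isLittleO, hE0]
      simp only [sub_zero, smul_zero]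
      rw [Asymptotics.isLittleO_iff]
      intro c hc
      have hcpos : (0:ℝ) < c / (2 * φ₁ + 1) := by positivity
      have hev : ∀ᶠ t in 𝓝 s, |t - s| < c / (2 * φ₁ + 1) := by
        have : Filter.Tendsto (fun t : ℝ => |t - s|) (𝓝 s) (𝓝 |s - s|) :=
          (continuous_abs.comp (continuous_id.sub continuous_const)).tendsto s
        simp only [sub_self, abs_zero] at this
        exact this.eventually_lt_const hcpos
      filter_upwards [hEsmall, hev] with t hle hlt
      rw [Real.norm_eq_abs (t - s)]
      calc ‖E t‖ ≤ 2 * φ₁ * (|t - s| * |t - s|) := hle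
        _ ≤ c * |t - s| := by
            have h7 : |t - s| * (2 * φ₁ + 1) ≤ c :=
              ((lt_div_iff₀ (by positivity)).mp hlt).le
            nlinarith [abs_nonneg (t - s), hφ₁, h7,
              mul_le_mul_of_nonneg_right h7 (abs_nonneg (t - s))]
    -- assemble
    refine ⟨γ • g s Y - β • g s X + ∫ u in X..Y, fderiv ℝ f (u, u - s) (0, -1), ?_, ?_⟩
    · have hcomb := ((hAder.add hBd).sub_const (∫ u in X..Y, g s u)).add hE
      have hfun : (fun t =>
          ((Φ (max (max (a₂ + t) a₁) (min (b₂ + t) b₁)) - Φ (max (a₂ + t) a₁)) +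
            ∫ u in X..Y, g t u) - (∫ u in X..Y, g s u) + E t) = F := by
        funext t
        rw [hEdef]
        simp only
        ring
      replace hcomb : HasDerivAt (fun t =>
          ((Φ (max (max (a₂ + t) a₁) (min (b₂ + t) b₁)) - Φ (max (a₂ + t) a₁)) +
            ∫ u in X..Y, g t u) - (∫ u in X..Y, g s u) + E t) _ s := hcomb
      rw [hfun] at hcomb
      convert hcomb using 1
      ring
    · have hq : ‖∫ u in X..Y, fderiv ℝ f (u, u - s) (0, -1)‖ ≤ φ₁ * (b₂ - a₂) := by
        calc ‖∫ u in X..Y, fderiv ℝ f (u, u - s) (0, -1)‖ ≤ φ₁ * |Y - X| :=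
              intervalIntegral.norm_integral_le_of_norm_le_const fun u _ => hdernorm u s
          _ = φ₁ * (Y - X) := by rw [abs_of_nonneg (by linarith)]
          _ ≤ φ₁ * (b₂ - a₂) := mul_le_mul_of_nonneg_left hYX hφ₁
      calc ‖γ • g s Y - β • g s X + ∫ u in X..Y, fderiv ℝ f (u, u - s) (0, -1)‖
          ≤ ‖γ • g s Y - β • g s X‖ + ‖∫ u in X..Y, fderiv ℝ f (u, u - s) (0, -1)‖ :=
            norm_add_le _ _
        _ ≤ (‖γ • g s Y‖ + ‖β • g s X‖) + φ₁ * (b₂ - a₂) :=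
            add_le_add (norm_sub_le _ _) hq
        _ ≤ (φ₀ + φ₀) + φ₁ * (b₂ - a₂) := by
            refine add_le_add ?_ le_rfl
            apply add_le_add
            · rw [norm_smul, Real.norm_eq_abs]
              calc |γ| * ‖g s Y‖ ≤ 1 * φ₀ :=
                    mul_le_mul hγ (hb _) (norm_nonneg _) zero_le_one
                _ = φ₀ := one_mul _
            · rw [norm_smul, Real.norm_eq_abs]
              calc |β| * ‖g s X‖ ≤ 1 * φ₀ :=
                    mul_le_mul hβ (hb _) (norm_nonneg _) zero_le_one
                _ = φ₀ := one_mul _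
        _ = φ₁ * (b₂ - a₂) + 2 * φ₀ := by ring
end

section
/- Suppose Γ: [0, T] → [0, ∞) is integrable, bounded, and for all τ ∈ [0, T) and all sufficiently small ε > 0 satisfies Γ(τ + ε) ≤ Γ(τ) + ε·c·Γ̄(τ) + C₁ε², where Γ̄(τ) = sup_{τ' ≤ τ} Γ(τ'). If additionally Γ satisfies the one-sided perturbation bound Γ(τ) ≤ Γ(τ') + C₂(τ − τ') for τ' ≤ τ, then Γ(τ) ≤ Γ(0) + c ∫₀^τ Γ̄(τ') dτ' for all τ ∈ [0, T]. -/
open MeasureTheory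

theorem stmt11 (T c C₁ C₂ : ℝ) (hT : 0 ≤ T) (Γ : ℝ → ℝ)
    (hint : IntegrableOn Γ (Set.Icc 0 T))
    (hnn : ∀ τ ∈ Set.Icc 0 T, 0 ≤ Γ τ)
    (M : ℝ) (hbd : ∀ τ ∈ Set.Icc 0 T, Γ τ ≤ M)
    (Γbar : ℝ → ℝ) (hΓbar : ∀ τ, Γbar τ = sSup (Γ '' Set.Icc 0 τ))
    (hstep : ∀ τ ∈ Set.Ico 0 T, ∃ ε₀ > 0, ∀ ε, 0 < ε → ε < ε₀ → τ + ε ≤ T →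
      Γ (τ + ε) ≤ Γ τ + ε * c * Γbar τ + C₁ * ε ^ 2)
    (hpert : ∀ τ' τ, 0 ≤ τ' → τ' ≤ τ → τ ≤ T → Γ τ ≤ Γ τ' + C₂ * (τ - τ')) :
    ∀ τ ∈ Set.Icc 0 T, Γ τ ≤ Γ 0 + c * ∫ τ' in (0:ℝ)..τ, Γbar τ' := by
  have hM0 : (0:ℝ) ≤ M := le_trans (hnn 0 ⟨le_rfl, hT⟩) (hbd 0 ⟨le_rfl, hT⟩)
  have hbdd : ∀ σ : ℝ, 0 ≤ σ → σ ≤ T → BddAbove (Γ '' Set.Icc 0 σ) := by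
    intro σ h0 hσT
    refine ⟨M, ?_⟩
    rintro y ⟨x, hx, rfl⟩
    exact hbd x ⟨hx.1, hx.2.trans hσT⟩
  have hne : ∀ σ : ℝ, 0 ≤ σ → (Γ '' Set.Icc 0 σ).Nonempty :=
    fun σ h => ⟨Γ 0, 0, ⟨le_rfl, h⟩, rfl⟩
  have hbar_ge : ∀ σ : ℝ, 0 ≤ σ → σ ≤ T → ∀ x ∈ Set.Icc 0 σ, Γ x ≤ Γbar σ := by
    intro σ h0 hσT x hx
    rw [hΓbar]; exact le_csSup (hbdd σ h0 hσT) ⟨x, hx, rfl⟩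
  have hbar_le : ∀ σ : ℝ, 0 ≤ σ → ∀ B : ℝ, (∀ x ∈ Set.Icc 0 σ, Γ x ≤ B) → Γbar σ ≤ B := by
    intro σ h0 B hB
    rw [hΓbar]
    refine csSup_le (hne σ h0) ?_
    rintro y ⟨x, hx, rfl⟩
    exact hB x hx
  have hbar_nn : ∀ σ : ℝ, 0 ≤ σ → σ ≤ T → 0 ≤ Γbar σ :=
    fun σ h0 hσT => le_trans (hnn 0 ⟨le_rfl, hT⟩) (hbar_ge σ h0 hσT 0 ⟨le_rfl, h0⟩)
  have hbar_M : ∀ σ : ℝ, 0 ≤ σ → σ ≤ T → Γbar σ ≤ M :=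
    fun σ h0 hσT => hbar_le σ h0 M (fun x hx => hbd x ⟨hx.1, hx.2.trans hσT⟩)
  have hbar_mono : MonotoneOn Γbar (Set.Icc 0 T) := by
    intro a ha b hb hab
    rw [hΓbar, hΓbar]
    exact csSup_le_csSup (hbdd b hb.1 hb.2) (hne a ha.1)
      (Set.image_mono (Set.Icc_subset_Icc_right hab))
  have hii : ∀ a b : ℝ, 0 ≤ a → a ≤ b → b ≤ T → IntervalIntegrable Γbar volume a b := by
    intro a b h0 hab hbT
    apply MonotoneOn.intervalIntegrable
    apply hbar_mono.mono
    rw [Set.uIcc_of_le hab]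
    exact Set.Icc_subset_Icc h0 hbT
  have hint_ub : ∀ a b B : ℝ, 0 ≤ a → a ≤ b → b ≤ T → (∀ x ∈ Set.Icc a b, Γbar x ≤ B) →
      (∫ x in a..b, Γbar x) ≤ (b - a) * B := by
    intro a b B h0 hab hbT hB
    have := intervalIntegral.integral_mono_on hab (hii a b h0 hab hbT)
      (intervalIntegrable_const (c := B)) hB
    simpa [intervalIntegral.integral_const, smul_eq_mul] using this
  have hint_lb : ∀ a b B : ℝ, 0 ≤ a → a ≤ b → b ≤ T → (∀ x ∈ Set.Icc a b, B ≤ Γbar x) →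
      (b - a) * B ≤ ∫ x in a..b, Γbar x := by
    intro a b B h0 hab hbT hB
    have := intervalIntegral.integral_mono_on hab (intervalIntegrable_const (c := B))
      (hii a b h0 hab hbT) hB
    simpa [intervalIntegral.integral_const, smul_eq_mul] using this
  -- main lemma with slack δ
  have main : ∀ δ : ℝ, 0 < δ → ∀ σ ∈ Set.Icc (0:ℝ) T,
      Γ σ ≤ Γ 0 + c * (∫ x in (0:ℝ)..σ, Γbar x) + δ * σ := by
    intro δ hδ
    set A : Set ℝ := {t : ℝ | t ∈ Set.Icc (0:ℝ) T ∧ ∀ σ ∈ Set.Icc (0:ℝ) t,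
      Γ σ ≤ Γ 0 + c * (∫ x in (0:ℝ)..σ, Γbar x) + δ * σ} with hA
    have h0A : (0:ℝ) ∈ A := by
      refine ⟨⟨le_rfl, hT⟩, ?_⟩
      intro σ hσ
      have : σ = 0 := le_antisymm hσ.2 hσ.1
      subst this
      simp
    have hAbd : BddAbove A := ⟨T, fun x hx => hx.1.2⟩
    set s := sSup A with hs
    have hsmem : ∀ x ∈ A, x ≤ s := fun x hx => le_csSup hAbd hx
    have hs0 : 0 ≤ s := hsmem 0 h0A
    have hsT : s ≤ T := csSup_le ⟨0, h0A⟩ (fun x hx => hx.1.2)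
    have hPlt : ∀ σ : ℝ, 0 ≤ σ → σ < s →
        Γ σ ≤ Γ 0 + c * (∫ x in (0:ℝ)..σ, Γbar x) + δ * σ := by
      intro σ h0 hσ
      obtain ⟨x, hxA, hx⟩ := exists_lt_of_lt_csSup ⟨0, h0A⟩ hσ
      exact hxA.2 σ ⟨h0, hx.le⟩
    have hPs : Γ s ≤ Γ 0 + c * (∫ x in (0:ℝ)..s, Γbar x) + δ * s := by
      refine le_of_forall_pos_le_add ?_
      intro ε hε
      set K2 : ℝ := |c| * M + |C₂| + 1 with hK2
      have hK2pos : 0 < K2 := by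
        have h1 : 0 ≤ |c| * M := mul_nonneg (abs_nonneg c) hM0
        have h2 : 0 ≤ |C₂| := abs_nonneg C₂
        nlinarith
      have hεK : 0 < ε / K2 := div_pos hε hK2pos
      obtain ⟨t', ht'A, ht'⟩ := exists_lt_of_lt_csSup ⟨0, h0A⟩ (show s - ε / K2 < s by linarith)
      have ht'0 : 0 ≤ t' := ht'A.1.1
      have ht's : t' ≤ s := hsmem t' ht'A
      have hPt' : Γ t' ≤ Γ 0 + c * (∫ x in (0:ℝ)..t', Γbar x) + δ * t' :=
        ht'A.2 t' ⟨ht'0, le_rfl⟩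
      have h1 : Γ s ≤ Γ t' + C₂ * (s - t') := hpert t' s ht'0 ht's hsT
      have hsplit : (∫ x in (0:ℝ)..t', Γbar x) + (∫ x in t'..s, Γbar x)
          = ∫ x in (0:ℝ)..s, Γbar x :=
        intervalIntegral.integral_add_adjacent_intervals
          (hii 0 t' le_rfl ht'0 (ht's.trans hsT)) (hii t' s ht'0 ht's hsT)
      have hIub : (∫ x in t'..s, Γbar x) ≤ (s - t') * M :=
        hint_ub t' s M ht'0 ht's hsT
          (fun x hx => hbar_M x (ht'0.trans hx.1) (hx.2.trans hsT))
      have hIlb : (0:ℝ) ≤ ∫ x in t'..s, Γbar x := by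
        have := hint_lb t' s 0 ht'0 ht's hsT
          (fun x hx => hbar_nn x (ht'0.trans hx.1) (hx.2.trans hsT))
        simpa using this
      set I : ℝ := ∫ x in t'..s, Γbar x with hI
      have hcI : -(c * I) ≤ |c| * ((s - t') * M) := by
        have h2 : |c * I| ≤ |c| * ((s - t') * M) := by
          rw [abs_mul, abs_of_nonneg hIlb]
          exact mul_le_mul_of_nonneg_left hIub (abs_nonneg c)
        linarith [neg_abs_le (c * I), h2]
      have hC2 : C₂ * (s - t') ≤ |C₂| * (s - t') :=
        mul_le_mul_of_nonneg_right (le_abs_self C₂) (by linarith)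
      have hd : s - t' ≤ ε / K2 := by linarith
      have hd0 : 0 ≤ s - t' := by linarith
      have hfin : |c| * ((s - t') * M) + |C₂| * (s - t') ≤ ε := by
        have h3 : (s - t') * K2 ≤ (ε / K2) * K2 :=
          mul_le_mul_of_nonneg_right hd (le_of_lt hK2pos)
        have h4 : (ε / K2) * K2 = ε := div_mul_cancel₀ ε (ne_of_gt hK2pos)
        nlinarith [mul_nonneg (abs_nonneg c) hM0, abs_nonneg C₂]
      have hδt : δ * t' ≤ δ * s := mul_le_mul_of_nonneg_left ht's (le_of_lt hδ)
      have hmul : c * (∫ x in (0:ℝ)..t', Γbar x) = c * (∫ x in (0:ℝ)..s, Γbar x) - c * I := by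
        rw [← hsplit]; ring
      linarith
    have hsA : s ∈ A := by
      refine ⟨⟨hs0, hsT⟩, ?_⟩
      intro σ hσ
      rcases lt_or_eq_of_le hσ.2 with h | h
      · exact hPlt σ hσ.1 h
      · subst h; exact hPs
    have hsTeq : s = T := by
      by_contra hne'
      have hsltT : s < T := lt_of_le_of_ne hsT hne'
      obtain ⟨ε₀, hε₀, hstep'⟩ := hstep s ⟨hs0, hsltT⟩
      set K : ℝ := |C₁| + |c| * |C₂| + 1 with hK
      have hKpos : 0 < K := by positivity
      set e : ℝ := min (min (ε₀ / 2) ((T - s) / 2)) (δ / K) with he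
      have he0 : 0 < e := lt_min (lt_min (by linarith) (by linarith)) (div_pos hδ hKpos)
      have heε₀ : e < ε₀ := lt_of_le_of_lt ((min_le_left _ _).trans (min_le_left _ _))
        (by linarith)
      have heT : s + e ≤ T := by
        have : e ≤ (T - s) / 2 := (min_le_left _ _).trans (min_le_right _ _)
        linarith
      have heδK : e ≤ δ / K := min_le_right _ _
      have hseA : s + e ∈ A := by
        refine ⟨⟨by linarith, heT⟩, ?_⟩
        intro σ hσ
        rcases le_or_gt σ s with h | h
        · exact hsA.2 σ ⟨hσ.1, h⟩
        · set u : ℝ := σ - s with hu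
          have hu0 : 0 < u := by simp only [hu]; linarith
          have hue : u ≤ e := by simp only [hu]; linarith [hσ.2]
          have huε₀ : u < ε₀ := lt_of_le_of_lt hue heε₀
          have hσT : σ ≤ T := by linarith [hσ.2]
          have hσeq : σ = s + u := by simp [hu]
          have hΓσ : Γ σ ≤ Γ s + u * c * Γbar s + C₁ * u ^ 2 := by
            rw [hσeq]
            exact hstep' u hu0 huε₀ (by rw [← hσeq]; exact hσT)
          set B : ℝ := Γbar s with hB
          have hbar_ub : ∀ x ∈ Set.Icc s σ, Γbar x ≤ B + |C₂| * u := by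
            intro x hx
            have hx0 : 0 ≤ x := hs0.trans hx.1
            have hxT : x ≤ T := hx.2.trans hσT
            refine hbar_le x hx0 _ ?_
            intro y hy
            rcases le_or_gt y s with hys | hys
            · have : Γ y ≤ B := hbar_ge s hs0 hsT y ⟨hy.1, hys⟩
              have : 0 ≤ |C₂| * u := mul_nonneg (abs_nonneg C₂) (le_of_lt hu0)
              linarith [hbar_ge s hs0 hsT y ⟨hy.1, hys⟩]
            · have h5 : Γ y ≤ Γ s + C₂ * (y - s) := hpert s y hs0 (le_of_lt hys)
                (hy.2.trans hxT)
              have h6 : Γ s ≤ B := hbar_ge s hs0 hsT s ⟨hs0, le_rfl⟩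
              have h7 : C₂ * (y - s) ≤ |C₂| * (y - s) :=
                mul_le_mul_of_nonneg_right (le_abs_self C₂) (by linarith)
              have h8 : |C₂| * (y - s) ≤ |C₂| * u := by
                apply mul_le_mul_of_nonneg_left _ (abs_nonneg C₂)
                have : y ≤ σ := hy.2.trans hx.2
                simp only [hu]; linarith
              linarith
          have hbar_lb : ∀ x ∈ Set.Icc s σ, B ≤ Γbar x := by
            intro x hx
            exact hbar_mono ⟨hs0, hsT⟩ ⟨hs0.trans hx.1, hx.2.trans hσT⟩ hx.1
          have hss : s ≤ σ := le_of_lt h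
          have hJub : (∫ x in s..σ, Γbar x) ≤ (σ - s) * (B + |C₂| * u) :=
            hint_ub s σ _ hs0 hss hσT hbar_ub
          have hJlb : (σ - s) * B ≤ ∫ x in s..σ, Γbar x :=
            hint_lb s σ B hs0 hss hσT hbar_lb
          set J : ℝ := ∫ x in s..σ, Γbar x with hJ
          have hJub' : J - u * B ≤ |C₂| * u ^ 2 := by
            have : (σ - s) * (B + |C₂| * u) = u * B + |C₂| * u ^ 2 := by
              simp only [hu]; ring
            have h9 : (σ - s) * B = u * B := by simp only [hu]
            linarith
          have hJlb' : 0 ≤ J - u * B := by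
            have h9 : (σ - s) * B = u * B := by simp only [hu]
            linarith
          have hcJ : -(c * (J - u * B)) ≤ |c| * (|C₂| * u ^ 2) := by
            have h10 : |c * (J - u * B)| ≤ |c| * (|C₂| * u ^ 2) := by
              rw [abs_mul, abs_of_nonneg hJlb']
              exact mul_le_mul_of_nonneg_left hJub' (abs_nonneg c)
            linarith [neg_abs_le (c * (J - u * B))]
          have hring : c * J - c * (u * B) = c * (J - u * B) := by ring
          have hcJ' : u * c * B ≤ c * J + |c| * (|C₂| * u ^ 2) := by
            have : u * c * B = c * (u * B) := by ring
            linarith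
          have hsplit : (∫ x in (0:ℝ)..s, Γbar x) + J = ∫ x in (0:ℝ)..σ, Γbar x :=
            intervalIntegral.integral_add_adjacent_intervals
              (hii 0 s le_rfl hs0 hsT) (hii s σ hs0 hss hσT)
          have hKu : K * u ≤ δ := by
            have h11 : u * K ≤ δ := (le_div_iff₀ hKpos).mp (hue.trans heδK)
            linarith
          have hu2 : C₁ * u ^ 2 + |c| * (|C₂| * u ^ 2) ≤ δ * u := by
            nlinarith [le_abs_self C₁, hu0, hKu, mul_nonneg (abs_nonneg c) (abs_nonneg C₂)]
          have hδσ : δ * σ = δ * s + δ * u := by simp only [hu]; ring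
          have hmul : c * (∫ x in (0:ℝ)..σ, Γbar x)
              = c * (∫ x in (0:ℝ)..s, Γbar x) + c * J := by
            rw [← hsplit]; ring
          linarith [hPs]
      have : s + e ≤ s := hsmem _ hseA
      linarith
    intro σ hσ
    rw [hsTeq] at hsA
    exact hsA.2 σ hσ
  -- remove the slack
  intro τ hτ
  refine le_of_forall_pos_le_add ?_
  intro ε hε
  have hδ : 0 < ε / (T + 1) := div_pos hε (by linarith)
  have h1 := main _ hδ τ hτ
  have h2 : ε / (T + 1) * τ ≤ ε := by
    rw [div_mul_eq_mul_div, div_le_iff₀ (by linarith : (0:ℝ) < T + 1)]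
    nlinarith [hτ.1, hτ.2]
  linarith
end
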